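/- If M is a submanifold of a locally metallic Riemannian manifold (∇̄J = 0), then the induced tensor P satisfies the Codazzi-type identity (∇_X P)(Y) = Σ_α h_α(X,Y)·ξ_α + Σ_α u_α(Y)·A_α X for all tangent vector fields X, Y. -/

import Mathlib

/-- Codazzi-type identity: on a submanifold of a locally metallic Riemannian manifold
(`∇̄J = 0`), the induced tensor `P` satisfies
`(∇_X P)(Y) = Σ_α h_α(X,Y)·ξ_α + Σ_α u_α(Y)·A_α X`. -/
theorem induced_P_codazzi
    {R : Type*} [CommRing R] [Algebra ℝ R]
    {T W : Type*} [AddCommGroup T] [Module R T] [AddCommGroup W] [Module R W]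
    (p q : ℝ) (hp : 0 < p) (hq : 0 < q)
    -- the immersion of tangent fields into ambient fields along M, and the tangential projection
    (ι : T →ₗ[R] W) (π : W →ₗ[R] T) (hπι : ∀ x, π (ι x) = x)
    -- the ambient metric, the metallic structure J and its compatibility with the metric
    (gbar : W →ₗ[R] W →ₗ[R] R) (hgsym : ∀ v w, gbar v w = gbar w v)
    (J : W →ₗ[R] W)
    (hJ2 : ∀ v, J (J v) = algebraMap ℝ R p • J v + algebraMap ℝ R q • v)
    (hJcompat : ∀ v w, gbar (J v) w = gbar v (J w))
    -- an orthonormal normal frame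
    (r : ℕ) (N : Fin r → W)
    (hON : ∀ α β, gbar (N α) (N β) = if α = β then 1 else 0)
    (hNperp : ∀ α x, gbar (N α) (ι x) = 0)
    (hπN : ∀ α, π (N α) = 0)
    -- vector fields act on functions as derivations; ambient and induced connections
    (D : T → Derivation ℝ R R)
    (nabbar : T → W → W) (nab : T → T → T)
    (hadd : ∀ X v w, nabbar X (v + w) = nabbar X v + nabbar X w)
    (hLeib : ∀ X (f : R) v, nabbar X (f • v) = D X f • v + f • nabbar X v)
    -- J is parallel: the ambient manifold is locally metallic
    (hJpar : ∀ X v, nabbar X (J v) = J (nabbar X v))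
    -- Gauss and Weingarten formulas
    (h : Fin r → T → T → R) (A : Fin r → T → T) (l : Fin r → Fin r → T → R)
    (hGauss : ∀ X Y, nabbar X (ι Y) = ι (nab X Y) + ∑ α, h α X Y • N α)
    (hWein : ∀ X α, nabbar X (N α) = - ι (A α X) + ∑ β, l α β X • N β)
    -- the induced Σ-structure
    (P : T → T) (u : Fin r → T → R) (ξ : Fin r → T) (a : Fin r → Fin r → R)
    (hdecT : ∀ X, J (ι X) = ι (P X) + ∑ α, u α X • N α)
    (hdecN : ∀ α, J (N α) = ι (ξ α) + ∑ β, a α β • N β) :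
    ∀ X Y, nab X (P Y) - P (nab X Y) = ∑ α, h α X Y • ξ α + ∑ α, u α Y • A α X := by
  intro X Y
  have hzero : nabbar X 0 = 0 := by
    have := hLeib X 0 0
    simpa using this
  have hsum : ∀ (f : Fin r → W), nabbar X (∑ α, f α) = ∑ α, nabbar X (f α) := by
    intro f
    induction (Finset.univ : Finset (Fin r)) using Finset.induction with
    | empty => simpa using hzero
    | insert _ _ hα ih => rw [Finset.sum_insert hα, hadd, ih, Finset.sum_insert hα]
  have e1 : nabbar X (J (ι Y))
      = ι (P (nab X Y)) + ∑ α, u α (nab X Y) • N α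
        + ∑ α, h α X Y • (ι (ξ α) + ∑ β, a α β • N β) := by
    rw [hJpar, hGauss, map_add, map_sum, hdecT]
    simp only [map_smul, hdecN]
  have e2 : nabbar X (J (ι Y))
      = ι (nab X (P Y)) + ∑ α, h α X (P Y) • N α
        + ∑ α, (D X (u α Y) • N α + u α Y • (- ι (A α X) + ∑ β, l α β X • N β)) := by
    rw [hdecT, hadd, hGauss, hsum]
    congr 1
    exact Finset.sum_congr rfl fun α _ => by rw [hLeib, hWein]
  have key := e1.symm.trans e2
  have hπ := congrArg π key
  simp only [map_add, map_sum, map_smul, map_neg, hπι, hπN, smul_zero, add_zero,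
    Finset.sum_const_zero, smul_neg] at hπ
  have hπ' : P (nab X Y) + ∑ α, h α X Y • ξ α
      = nab X (P Y) - ∑ α, u α Y • A α X := by
    simp only [zero_add] at hπ
    rw [hπ, Finset.sum_neg_distrib]
    abel
  rw [eq_sub_iff_add_eq] at hπ'
  have : nab X (P Y) = P (nab X Y) + ∑ α, h α X Y • ξ α + ∑ α, u α Y • A α X := hπ'.symm
  rw [this]
  abel
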